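/- For every set F, the class of linearly ordered sets equipped with an F-indexed family of order automorphisms has the strong amalgamation property: whenever A, B, C are linearly ordered sets, each equipped with an F-indexed family of order automorphisms (order preserving bijections), and i_A : C → A, i_B : C → B are order embeddings commuting with each indexed automorphism, there exist a linearly ordered set D with an F-indexed family of order automorphisms and order embeddings j_A : A → D, j_B : B → D commuting with each indexed automorphism, such that j_A ∘ i_A = j_B ∘ i_B and range(j_A) ∩ range(j_B) = range(j_A ∘ i_A). -/

import Mathlib

/-- A linearly ordered set equipped with an `F`-indexed family of order
automorphisms. -/
structure LinOrderAuts (F : Type) where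
  carrier : Type
  [linOrd : LinearOrder carrier]
  f : F → carrier ≃o carrier

attribute [instance] LinOrderAuts.linOrd

section Amalg

variable {F : Type} {A B C : LinOrderAuts F}
variable (iA : C.carrier ↪o A.carrier) (iB : C.carrier ↪o B.carrier)

/-- The order relation on the amalgam carrier `A ⊕ B`. -/
def dle : A.carrier ⊕ B.carrier → A.carrier ⊕ B.carrier → Prop
  | .inl a, .inl a' => a ≤ a'
  | .inl a, .inr b => ∀ c, iA c ≤ a → iB c < b
  | .inr b, .inl a => ∃ c, b ≤ iB c ∧ iA c ≤ a
  | .inr b, .inr b' => b ≤ b'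

noncomputable def dOrder : LinearOrder (A.carrier ⊕ B.carrier) where
  le := dle iA iB
  lt x y := dle iA iB x y ∧ ¬ dle iA iB y x
  lt_iff_le_not_ge _ _ := Iff.rfl
  le_refl x := by cases x with
    | inl a => exact le_refl a
    | inr b => exact le_refl b
  le_trans x y z hxy hyz := by
    cases x with
    | inl a =>
      cases y with
      | inl a' =>
        cases z with
        | inl a'' => exact le_trans hxy hyz
        | inr b => exact fun c hc => hyz c (le_trans hc hxy)
      | inr b =>
        cases z with
        | inl a' =>
          obtain ⟨c, h1, h2⟩ := hyz
          exact le_of_not_gt fun h => absurd h1 (not_le.2 (hxy c (h2.trans h.le)))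
        | inr b' => exact fun c hc => lt_of_lt_of_le (hxy c hc) hyz
    | inr b =>
      cases y with
      | inl a =>
        cases z with
        | inl a' =>
          obtain ⟨c, h1, h2⟩ := hxy
          exact ⟨c, h1, h2.trans hyz⟩
        | inr b' =>
          obtain ⟨c, h1, h2⟩ := hxy
          exact h1.trans (hyz c h2).le
      | inr b' =>
        cases z with
        | inl a =>
          obtain ⟨c, h1, h2⟩ := hyz
          exact ⟨c, hxy.trans h1, h2⟩
        | inr b'' => exact hxy.trans hyz
  le_antisymm x y hxy hyx := by
    cases x with
    | inl a =>
      cases y with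
      | inl a' => exact congrArg _ (le_antisymm hxy hyx)
      | inr b =>
        obtain ⟨c, h1, h2⟩ := hyx
        exact absurd h1 (not_le.2 (hxy c h2))
    | inr b =>
      cases y with
      | inl a =>
        obtain ⟨c, h1, h2⟩ := hxy
        exact absurd h1 (not_le.2 (hyx c h2))
      | inr b' => exact congrArg _ (le_antisymm hxy hyx)
  le_total x y := by
    cases x with
    | inl a =>
      cases y with
      | inl a' => exact le_total a a'
      | inr b =>
        by_cases h : ∀ c, iA c ≤ a → iB c < b
        · exact Or.inl h
        · push_neg at h
          obtain ⟨c, h1, h2⟩ := h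
          exact Or.inr ⟨c, h2, h1⟩
    | inr b =>
      cases y with
      | inl a =>
        by_cases h : ∀ c, iA c ≤ a → iB c < b
        · exact Or.inr h
        · push_neg at h
          obtain ⟨c, h1, h2⟩ := h
          exact Or.inl ⟨c, h2, h1⟩
      | inr b' => exact le_total b b'
  toDecidableLE := Classical.decRel _

variable (hA : ∀ i c, iA (C.f i c) = A.f i (iA c))
variable (hB : ∀ i c, iB (C.f i c) = B.f i (iB c))

/-- The amalgam. -/
noncomputable def Damalg : LinOrderAuts F where
  carrier := A.carrier ⊕ B.carrier
  linOrd := dOrder iA iB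
  f i :=
    { toEquiv := Equiv.sumCongr (A.f i).toEquiv (B.f i).toEquiv
      map_rel_iff' := by
        intro x y
        cases x with
        | inl a =>
          cases y with
          | inl a' => exact (A.f i).le_iff_le
          | inr b =>
            show (∀ c, iA c ≤ A.f i a → iB c < B.f i b) ↔ ∀ c, iA c ≤ a → iB c < b
            constructor
            · intro H c hc
              have h1 : iA (C.f i c) ≤ A.f i a := by
                rw [hA]; exact (A.f i).le_iff_le.2 hc
              have h2 := H (C.f i c) h1
              rw [hB] at h2
              exact (B.f i).lt_iff_lt.1 h2
            · intro H c hc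
              set c' := (C.f i).symm c with hc'def
              have hc' : C.f i c' = c := (C.f i).apply_symm_apply c
              have h1 : iA c' ≤ a := by
                have := hA i c'
                rw [hc'] at this
                rw [this] at hc
                exact (A.f i).le_iff_le.1 hc
              have h2 := H c' h1
              have := (B.f i).lt_iff_lt.2 h2
              rw [← hB, hc'] at this
              exact this
        | inr b =>
          cases y with
          | inl a =>
            show (∃ c, B.f i b ≤ iB c ∧ iA c ≤ A.f i a) ↔ ∃ c, b ≤ iB c ∧ iA c ≤ a
            constructor
            · rintro ⟨c, h1, h2⟩
              refine ⟨(C.f i).symm c, ?_, ?_⟩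
              · have h3 : iB (C.f i ((C.f i).symm c)) = B.f i (iB ((C.f i).symm c)) := hB i _
                rw [(C.f i).apply_symm_apply] at h3
                rw [h3] at h1
                exact (B.f i).le_iff_le.1 h1
              · have h3 : iA (C.f i ((C.f i).symm c)) = A.f i (iA ((C.f i).symm c)) := hA i _
                rw [(C.f i).apply_symm_apply] at h3
                rw [h3] at h2
                exact (A.f i).le_iff_le.1 h2
            · rintro ⟨c, h1, h2⟩
              refine ⟨C.f i c, ?_, ?_⟩
              · rw [hB]; exact (B.f i).le_iff_le.2 h1
              · rw [hA]; exact (A.f i).le_iff_le.2 h2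
          | inr b' => exact (B.f i).le_iff_le }

/-- The embedding of `A` into the amalgam. -/
noncomputable def jAemb : A.carrier ↪o (Damalg iA iB hA hB).carrier :=
  OrderEmbedding.ofMapLEIff Sum.inl (fun _ _ => Iff.rfl)

open Classical in
/-- The underlying map of the embedding of `B` into the amalgam. -/
noncomputable def jBfun (b : B.carrier) : A.carrier ⊕ B.carrier :=
  if h : ∃ c, iB c = b then Sum.inl (iA h.choose) else Sum.inr b

lemma jBfun_iB (c : C.carrier) : jBfun iA iB (iB c) = Sum.inl (iA c) := by
  unfold jBfun
  rw [dif_pos ⟨c, rfl⟩]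
  exact congrArg _ (congrArg _ (iB.injective (⟨c, rfl⟩ : ∃ c', iB c' = iB c).choose_spec))

lemma jBfun_not {b : B.carrier} (h : ¬ ∃ c, iB c = b) : jBfun iA iB b = Sum.inr b := by
  unfold jBfun
  rw [dif_neg h]

/-- The embedding of `B` into the amalgam. -/
noncomputable def jBemb : B.carrier ↪o (Damalg iA iB hA hB).carrier :=
  OrderEmbedding.ofMapLEIff (jBfun iA iB)
    (by
      intro b b'
      by_cases h1 : ∃ c, iB c = b
      · obtain ⟨c, rfl⟩ := h1
        rw [jBfun_iB]
        by_cases h2 : ∃ c', iB c' = b'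
        · obtain ⟨c', rfl⟩ := h2
          rw [jBfun_iB, iB.le_iff_le]
          show iA c ≤ iA c' ↔ _
          exact iA.le_iff_le
        · rw [jBfun_not iA iB h2]
          show (∀ c'', iA c'' ≤ iA c → iB c'' < b') ↔ _
          constructor
          · intro H
            exact (H c le_rfl).le
          · intro H c'' hc
            have hle : iB c'' ≤ b' := le_trans (iB.le_iff_le.2 (iA.le_iff_le.1 hc)) H
            exact lt_of_le_of_ne hle fun he => h2 ⟨c'', he⟩
      · rw [jBfun_not iA iB h1]
        by_cases h2 : ∃ c', iB c' = b'
        · obtain ⟨c', rfl⟩ := h2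
          rw [jBfun_iB]
          show (∃ c, b ≤ iB c ∧ iA c ≤ iA c') ↔ _
          constructor
          · rintro ⟨c, hc1, hc2⟩
            exact hc1.trans (iB.le_iff_le.2 (iA.le_iff_le.1 hc2))
          · intro H
            exact ⟨c', H, le_rfl⟩
        · rw [jBfun_not iA iB h2]
          exact Iff.rfl)

lemma jBemb_iB (c : C.carrier) : jBemb iA iB hA hB (iB c) = Sum.inl (iA c) :=
  jBfun_iB iA iB c

lemma jBemb_apply (b : B.carrier) : jBemb iA iB hA hB b = jBfun iA iB b := rfl

end Amalg

/-- For every set `F`, the class of linearly ordered sets with an `F`-indexed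
family of order automorphisms has the strong amalgamation property. -/
theorem linear_orders_automorphisms_strong_amalgamation (F : Type)
    (A B C : LinOrderAuts F)
    (iA : C.carrier ↪o A.carrier) (iB : C.carrier ↪o B.carrier)
    (hA : ∀ i c, iA (C.f i c) = A.f i (iA c))
    (hB : ∀ i c, iB (C.f i c) = B.f i (iB c)) :
    ∃ (D : LinOrderAuts F) (jA : A.carrier ↪o D.carrier)
      (jB : B.carrier ↪o D.carrier),
      (∀ i a, jA (A.f i a) = D.f i (jA a)) ∧
      (∀ i b, jB (B.f i b) = D.f i (jB b)) ∧
      (∀ c, jA (iA c) = jB (iB c)) ∧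
      Set.range jA ∩ Set.range jB = Set.range (fun c => jA (iA c)) := by
  refine ⟨Damalg iA iB hA hB, jAemb iA iB hA hB, jBemb iA iB hA hB, ?_, ?_, ?_, ?_⟩
  · intro i a
    rfl
  · intro i b
    rw [jBemb_apply, jBemb_apply]
    by_cases h : ∃ c, iB c = b
    · obtain ⟨c, rfl⟩ := h
      have h1 : B.f i (iB c) = iB (C.f i c) := (hB i c).symm
      rw [h1, jBfun_iB, jBfun_iB]
      show _ = Sum.inl (A.f i (iA c))
      rw [← hA]
    · have h' : ¬ ∃ c, iB c = B.f i b := by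
        rintro ⟨c, hc⟩
        apply h
        refine ⟨(C.f i).symm c, ?_⟩
        have h3 : iB (C.f i ((C.f i).symm c)) = B.f i (iB ((C.f i).symm c)) := hB i _
        rw [(C.f i).apply_symm_apply, hc] at h3
        exact (B.f i).injective h3.symm
      rw [jBfun_not iA iB h', jBfun_not iA iB h]
      rfl
  · intro c
    exact (jBemb_iB iA iB hA hB c).symm
  · ext x
    constructor
    · rintro ⟨⟨a, rfl⟩, ⟨b, hb⟩⟩
      by_cases h : ∃ c, iB c = b
      · obtain ⟨c, rfl⟩ := h
        rw [jBemb_iB] at hb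
        exact ⟨c, by rw [← hb]; rfl⟩
      · exfalso
        rw [jBemb_apply, jBfun_not iA iB h] at hb
        exact Sum.inr_ne_inl hb
    · rintro ⟨c, rfl⟩
      exact ⟨⟨iA c, rfl⟩, ⟨iB c, jBemb_iB iA iB hA hB c⟩⟩
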